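/- arXiv:2109.14522 — 2 statements merged into one kernel-verified Lean document; each statement's English description precedes it below -/
import Mathlib

section
/- Let A₁, …, A_m be Hermitian n×n matrices and let z ∈ ℂ^{n×r} have rank k > 0, with smallest nonzero singular value σ_k(z). Let ẑ ∈ ℂ^{n×k} be full rank with z = [ẑ | 0] U for some U ∈ U(r). Define a(z) = min { Σ_j ⟨W, A_j⟩_ℝ² : W Hermitian, P⊥ W P⊥ = 0, ‖W‖₂ = 1 } (P⊥ the projection onto Ran(z)^⊥) and â(z) = min { Σ_j ⟨ẑ w* + w ẑ*, A_j⟩_ℝ² : w ∈ H_{ẑ}, ‖w‖₂ = 1 }, where H_{ẑ} is the orthogonal complement in ℂ^{n×k} of {ẑ K : K skew-Hermitian}. Then (1/(4‖z‖₂²)) â(z) ≤ a(z) ≤ (1/(2σ_k(z)²)) â(z). -/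
open Matrix Filter
open scoped ComplexOrder

/-- The square root of a positive semidefinite matrix, as `Matrix.PosSemidef.sqrt` was
defined in Mathlib (December 2024); it has since been removed from Mathlib. -/
noncomputable def Matrix.PosSemidef.sqrt {n 𝕜 : Type*} [Fintype n] [DecidableEq n] [RCLike 𝕜]
    {A : Matrix n n 𝕜} (hA : A.PosSemidef) : Matrix n n 𝕜 :=
  hA.1.eigenvectorUnitary.1 * diagonal ((↑) ∘ (√·) ∘ hA.1.eigenvalues) *
    (star hA.1.eigenvectorUnitary : Matrix n n 𝕜)

noncomputable def frob {p q : ℕ} (x : Matrix (Fin p) (Fin q) ℂ) : ℝ :=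
  Real.sqrt (Matrix.trace (xᴴ * x)).re

noncomputable def rinner {p q : ℕ} (X Y : Matrix (Fin p) (Fin q) ℂ) : ℝ :=
  (Matrix.trace (Xᴴ * Y)).re

noncomputable def nuclear {p q : ℕ} (x : Matrix (Fin p) (Fin q) ℂ) : ℝ :=
  (Matrix.trace (Matrix.posSemidef_conjTranspose_mul_self x).sqrt).re

noncomputable def theta {n r : ℕ} (x : Matrix (Fin n) (Fin r) ℂ) : Matrix (Fin n) (Fin n) ℂ :=
  (Matrix.posSemidef_self_mul_conjTranspose x).sqrt

noncomputable def psi {n r : ℕ} (x : Matrix (Fin n) (Fin r) ℂ) : Matrix (Fin n) (Fin n) ℂ :=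
  frob x • theta x

noncomputable def Dmet {n r : ℕ} (x y : Matrix (Fin n) (Fin r) ℂ) : ℝ :=
  ⨅ U : Matrix.unitaryGroup (Fin r) ℂ, frob (x - y * (U : Matrix (Fin r) (Fin r) ℂ))

noncomputable def dmet {n r : ℕ} (x y : Matrix (Fin n) (Fin r) ℂ) : ℝ :=
  ⨅ U : Matrix.unitaryGroup (Fin r) ℂ,
    frob (x - y * (U : Matrix (Fin r) (Fin r) ℂ)) * frob (x + y * (U : Matrix (Fin r) (Fin r) ℂ))


/-- Membership of a Hermitian `W` in the tangent space
`T_z = {W : W* = W, P⊥ W P⊥ = 0}`, `P⊥` being the orthogonal projection onto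
`Ran(z)^⊥`. -/
def tangentCond {n r : ℕ} (z : Matrix (Fin n) (Fin r) ℂ)
    (W : Matrix (Fin n) (Fin n) ℂ) : Prop :=
  Wᴴ = W ∧ ∀ u v : Fin n → ℂ, zᴴ *ᵥ u = 0 → zᴴ *ᵥ v = 0 → star u ⬝ᵥ (W *ᵥ v) = 0

/-- The block matrix `[ẑ | 0] ∈ ℂ^{n×r}` built from `ẑ ∈ ℂ^{n×k}`, `k ≤ r`. -/
def padZero {n k : ℕ} (r : ℕ) (zh : Matrix (Fin n) (Fin k) ℂ) :
    Matrix (Fin n) (Fin r) ℂ :=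
  Matrix.of fun i j => if hj : (j : ℕ) < k then zh i ⟨j, hj⟩ else 0

/-- `a(z) = min {Σ_j ⟨W, A_j⟩_ℝ² : W ∈ T_z, ‖W‖₂ = 1}`. -/
noncomputable def aGeo {n r m : ℕ} (A : Fin m → Matrix (Fin n) (Fin n) ℂ)
    (z : Matrix (Fin n) (Fin r) ℂ) : ℝ :=
  sInf {t : ℝ | ∃ W : Matrix (Fin n) (Fin n) ℂ,
    tangentCond z W ∧ frob W = 1 ∧ t = ∑ j, rinner W (A j) ^ 2}

/-- `â(z) = min {Σ_j ⟨ẑ w* + w ẑ*, A_j⟩_ℝ² : w ∈ H_ẑ, ‖w‖₂ = 1}`, where `H_ẑ` is the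
orthogonal complement of the vertical space `{ẑ K : K* = −K}`. -/
noncomputable def aHat {n k m : ℕ} (A : Fin m → Matrix (Fin n) (Fin n) ℂ)
    (zh : Matrix (Fin n) (Fin k) ℂ) : ℝ :=
  sInf {t : ℝ | ∃ w : Matrix (Fin n) (Fin k) ℂ,
    (∀ K : Matrix (Fin k) (Fin k) ℂ, Kᴴ = -K →
      (Matrix.trace ((zh * K)ᴴ * w)).re = 0) ∧
    frob w = 1 ∧ t = ∑ j, rinner (zh * wᴴ + w * zhᴴ) (A j) ^ 2}

namespace AGeoAux

attribute [local instance] Matrix.frobeniusSeminormedAddCommGroup Matrix.frobeniusNormedSpace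
  Matrix.frobeniusIsBoundedSMul

variable {p q s k n r : ℕ}

noncomputable def fsq (x : Matrix (Fin p) (Fin q) ℂ) : ℝ := (Matrix.trace (xᴴ * x)).re

lemma fsq_eq_sum (x : Matrix (Fin p) (Fin q) ℂ) :
    fsq x = ∑ j, ∑ i, Complex.normSq (x i j) := by
  simp [fsq, Matrix.trace, Matrix.diag, Matrix.mul_apply, Matrix.conjTranspose_apply,
    Complex.re_sum, Complex.normSq_eq_conj_mul_self, Complex.normSq_apply]

lemma fsq_nonneg (x : Matrix (Fin p) (Fin q) ℂ) : 0 ≤ fsq x := by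
  rw [fsq_eq_sum]
  exact Finset.sum_nonneg fun j _ => Finset.sum_nonneg fun i _ => Complex.normSq_nonneg _

lemma eq_zero_of_fsq (x : Matrix (Fin p) (Fin q) ℂ) (h : fsq x ≤ 0) : x = 0 := by
  rw [fsq_eq_sum] at h
  ext i j
  have h1 : ∀ j ∈ Finset.univ, (0:ℝ) ≤ ∑ i, Complex.normSq (x i j) := by
    intro j _; exact Finset.sum_nonneg fun i _ => Complex.normSq_nonneg _
  have h2 := (Finset.sum_eq_zero_iff_of_nonneg h1).1 (le_antisymm h (Finset.sum_nonneg h1))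
  have h3 : ∀ i ∈ Finset.univ, (0:ℝ) ≤ Complex.normSq (x i j) := by
    intro i _; exact Complex.normSq_nonneg _
  have := (Finset.sum_eq_zero_iff_of_nonneg h3).1 (h2 j (Finset.mem_univ j)) i (Finset.mem_univ i)
  simpa [Complex.normSq_eq_zero] using this

lemma frob_eq_sqrt (x : Matrix (Fin p) (Fin q) ℂ) : frob x = Real.sqrt (fsq x) := rfl

lemma frob_sq (x : Matrix (Fin p) (Fin q) ℂ) : frob x ^ 2 = fsq x :=
  Real.sq_sqrt (fsq_nonneg x)

lemma frob_nonneg' (x : Matrix (Fin p) (Fin q) ℂ) : 0 ≤ frob x := Real.sqrt_nonneg _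

lemma frob_zero : frob (0 : Matrix (Fin p) (Fin q) ℂ) = 0 := by
  rw [frob_eq_sqrt]
  have : fsq (0 : Matrix (Fin p) (Fin q) ℂ) = 0 := by simp [fsq_eq_sum]
  rw [this, Real.sqrt_zero]

lemma frob_pos {x : Matrix (Fin p) (Fin q) ℂ} (h : x ≠ 0) : 0 < frob x := by
  rw [frob_eq_sqrt, Real.sqrt_pos]
  rcases lt_or_ge 0 (fsq x) with h1 | h1
  · exact h1
  · exact absurd (eq_zero_of_fsq x h1) h

lemma frob_eq_norm (x : Matrix (Fin p) (Fin q) ℂ) : frob x = ‖x‖ := by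
  rw [Matrix.frobenius_norm_def, frob_eq_sqrt, fsq_eq_sum, Real.sqrt_eq_rpow, Finset.sum_comm]
  congr 1
  refine Finset.sum_congr rfl fun i _ => Finset.sum_congr rfl fun j _ => ?_
  rw [Real.rpow_two, ← Complex.sq_norm]

lemma frob_add_le (x y : Matrix (Fin p) (Fin q) ℂ) : frob (x + y) ≤ frob x + frob y := by
  simp only [frob_eq_norm]; exact norm_add_le x y

lemma frob_mul_le (x : Matrix (Fin p) (Fin q) ℂ) (y : Matrix (Fin q) (Fin s) ℂ) :
    frob (x * y) ≤ frob x * frob y := by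
  simp only [frob_eq_norm]; exact Matrix.frobenius_norm_mul x y

lemma frob_conjT (x : Matrix (Fin p) (Fin q) ℂ) : frob xᴴ = frob x := by
  simp only [frob_eq_norm]; exact Matrix.frobenius_norm_conjTranspose x

lemma frob_smul (c : ℝ) (x : Matrix (Fin p) (Fin q) ℂ) :
    frob ((c : ℂ) • x) = |c| * frob x := by
  simp only [frob_eq_norm]
  rw [norm_smul]
  simp

lemma fsq_conjT (x : Matrix (Fin p) (Fin q) ℂ) : fsq xᴴ = fsq x := by
  have := frob_sq xᴴ
  rw [frob_conjT, frob_sq] at this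
  exact this.symm

lemma rinner_smul_left (c : ℝ) (X Y : Matrix (Fin p) (Fin q) ℂ) :
    rinner ((c : ℂ) • X) Y = c * rinner X Y := by
  rw [rinner, rinner, Matrix.conjTranspose_smul, Matrix.smul_mul, Matrix.trace_smul]
  simp [Complex.smul_re]

lemma rinner_self (X : Matrix (Fin p) (Fin q) ℂ) : rinner X X = fsq X := rfl

lemma rtrace_skew_herm {K M : Matrix (Fin k) (Fin k) ℂ} (hK : Kᴴ = -K) (hM : Mᴴ = M) :
    (Matrix.trace (Kᴴ * M)).re = 0 := by
  have h1 : (Matrix.trace (Kᴴ * M)).re = (Matrix.trace (K * M)).re := by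
    have e1 : star (Matrix.trace (Kᴴ * M)) = Matrix.trace (Mᴴ * K) := by
      rw [← Matrix.trace_conjTranspose]; simp
    have e2 : Matrix.trace (Mᴴ * K) = Matrix.trace (K * M) := by
      rw [hM, Matrix.trace_mul_comm]
    calc (Matrix.trace (Kᴴ * M)).re = (star (Matrix.trace (Kᴴ * M))).re := by
          simp [Complex.star_def]
      _ = (Matrix.trace (K * M)).re := by rw [e1, e2]
  have h2 : (Matrix.trace (Kᴴ * M)).re = -(Matrix.trace (K * M)).re := by
    rw [hK]; simp
  linarith

lemma fsq_add (X Y : Matrix (Fin p) (Fin q) ℂ) :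
    fsq (X + Y) = fsq X + fsq Y + 2 * rinner X Y := by
  have hsym : (Matrix.trace (Yᴴ * X)).re = (Matrix.trace (Xᴴ * Y)).re := by
    have : (Xᴴ * Y)ᴴ = Yᴴ * X := by simp
    rw [← this, Matrix.trace_conjTranspose]; simp
  rw [fsq, rinner]
  rw [Matrix.conjTranspose_add, Matrix.add_mul, Matrix.mul_add, Matrix.mul_add,
    Matrix.trace_add, Matrix.trace_add, Matrix.trace_add]
  simp only [Complex.add_re]
  rw [show (Matrix.trace (Yᴴ * X)).re = (Matrix.trace (Xᴴ * Y)).re from hsym]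
  rw [fsq, fsq]
  ring

lemma sum_dite_fin {M : Type*} [AddCommMonoid M] (hkr : k ≤ r) (g : Fin k → M) :
    ∑ j : Fin r, (if h : (j : ℕ) < k then g ⟨j, h⟩ else 0) = ∑ i : Fin k, g i := by
  classical
  have h1 : ∑ j : Fin r, (if h : (j : ℕ) < k then g ⟨j, h⟩ else 0)
      = ∑ j ∈ Finset.univ.map (Fin.castLEEmb hkr), (if h : (j : ℕ) < k then g ⟨j, h⟩ else 0) := by
    refine (Finset.sum_subset (Finset.subset_univ _) ?_).symm
    intro x _ hx
    rw [dif_neg]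
    intro hlt
    exact hx (Finset.mem_map.2 ⟨⟨(x : ℕ), hlt⟩, Finset.mem_univ _, by
      simp [Fin.castLEEmb, Fin.castLE]⟩)
  rw [h1, Finset.sum_map]
  refine Finset.sum_congr rfl fun i _ => ?_
  have hi : ((Fin.castLEEmb hkr i : Fin r) : ℕ) < k := by simp
  rw [dif_pos hi]
  have he : (⟨((Fin.castLEEmb hkr i : Fin r) : ℕ), hi⟩ : Fin k) = i := Fin.ext (by simp)
  rw [he]

lemma sigma_mulVec_bound (zh : Matrix (Fin n) (Fin k) ℂ) (σ : ℝ)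
    (hσ : σ ^ 2 = sInf {t : ℝ | ∃ v : Fin k → ℂ,
      (∑ i, Complex.normSq (v i)) = 1 ∧ t = ∑ i, Complex.normSq ((zh *ᵥ v) i)})
    (v : Fin k → ℂ) :
    σ ^ 2 * (∑ i, Complex.normSq (v i)) ≤ ∑ i, Complex.normSq ((zh *ᵥ v) i) := by
  by_cases hv : v = 0
  · simp [hv]
  · set s : ℝ := ∑ i, Complex.normSq (v i) with hs
    have hspos : 0 < s := by
      obtain ⟨i, hi⟩ := Function.ne_iff.1 hv
      exact Finset.sum_pos' (fun i _ => Complex.normSq_nonneg _)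
        ⟨i, Finset.mem_univ i, Complex.normSq_pos.2 hi⟩
    set c : ℝ := (Real.sqrt s)⁻¹ with hc
    have hc2 : c ^ 2 * s = 1 := by
      rw [hc, ← Real.sqrt_inv, Real.sq_sqrt (by positivity)]
      field_simp
    have hsmul : ∀ (w : Fin k → ℂ) (i : Fin k),
        Complex.normSq (((c : ℂ) • w) i) = c ^ 2 * Complex.normSq (w i) := by
      intro w i
      simp [Complex.normSq_mul, Complex.normSq_ofReal, sq]
    have hmem : (∑ i, Complex.normSq ((zh *ᵥ ((c : ℂ) • v)) i)) ∈
        {t : ℝ | ∃ u : Fin k → ℂ,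
          (∑ i, Complex.normSq (u i)) = 1 ∧ t = ∑ i, Complex.normSq ((zh *ᵥ u) i)} := by
      refine ⟨(c : ℂ) • v, ?_, rfl⟩
      simp only [hsmul, ← Finset.mul_sum]
      rw [← hs, hc2]
    have hbdd : BddBelow {t : ℝ | ∃ u : Fin k → ℂ,
        (∑ i, Complex.normSq (u i)) = 1 ∧ t = ∑ i, Complex.normSq ((zh *ᵥ u) i)} := by
      refine ⟨0, fun t ht => ?_⟩
      obtain ⟨u, _, rfl⟩ := ht
      exact Finset.sum_nonneg fun i _ => Complex.normSq_nonneg _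
    have hle : σ ^ 2 ≤ ∑ i, Complex.normSq ((zh *ᵥ ((c : ℂ) • v)) i) := by
      rw [hσ]; exact csInf_le hbdd hmem
    have hsc : ∑ i, Complex.normSq ((zh *ᵥ ((c : ℂ) • v)) i)
        = c ^ 2 * ∑ i, Complex.normSq ((zh *ᵥ v) i) := by
      rw [Matrix.mulVec_smul]
      simp only [Pi.smul_apply, smul_eq_mul, Complex.normSq_mul, Complex.normSq_ofReal,
        ← Finset.mul_sum, sq]
    rw [hsc] at hle
    calc σ ^ 2 * s ≤ c ^ 2 * s * (∑ i, Complex.normSq ((zh *ᵥ v) i)) := by nlinarith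
      _ = ∑ i, Complex.normSq ((zh *ᵥ v) i) := by rw [hc2, one_mul]

lemma fsq_zh_mul (zh : Matrix (Fin n) (Fin k) ℂ) (σ : ℝ)
    (hb : ∀ v : Fin k → ℂ,
      σ ^ 2 * (∑ i, Complex.normSq (v i)) ≤ ∑ i, Complex.normSq ((zh *ᵥ v) i))
    (K : Matrix (Fin k) (Fin q) ℂ) :
    σ ^ 2 * fsq K ≤ fsq (zh * K) := by
  rw [fsq_eq_sum, fsq_eq_sum, Finset.mul_sum]
  refine Finset.sum_le_sum fun j _ => ?_
  have he : ∀ i, (zh * K) i j = (zh *ᵥ fun l => K l j) i := fun i => rfl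
  simp only [he]
  exact hb (fun l => K l j)

lemma star_dot_G (zh : Matrix (Fin n) (Fin k) ℂ) (v : Fin k → ℂ) :
    star v ⬝ᵥ ((zhᴴ * zh) *ᵥ v) = ((∑ i, Complex.normSq ((zh *ᵥ v) i) : ℝ) : ℂ) := by
  rw [← Matrix.mulVec_mulVec, Matrix.dotProduct_mulVec]
  have h1 : star v ᵥ* zhᴴ = star (zh *ᵥ v) := (Matrix.star_mulVec zh v).symm
  rw [h1]
  simp only [dotProduct, Pi.star_apply]
  push_cast
  refine Finset.sum_congr rfl fun i _ => ?_
  rw [Complex.normSq_eq_conj_mul_self]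
  rfl

lemma G_det_ne_zero (zh : Matrix (Fin n) (Fin k) ℂ) (σ : ℝ) (hσpos : 0 < σ)
    (hb : ∀ v : Fin k → ℂ,
      σ ^ 2 * (∑ i, Complex.normSq (v i)) ≤ ∑ i, Complex.normSq ((zh *ᵥ v) i)) :
    (zhᴴ * zh).det ≠ 0 := by
  intro hdet
  obtain ⟨v, hv0, hv⟩ := (Matrix.exists_mulVec_eq_zero_iff).2 hdet
  have h1 : star v ⬝ᵥ ((zhᴴ * zh) *ᵥ v) = 0 := by rw [hv]; simp
  rw [star_dot_G] at h1
  have h2 : (∑ i, Complex.normSq ((zh *ᵥ v) i) : ℝ) = 0 := by exact_mod_cast h1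
  have h3 := hb v
  rw [h2] at h3
  have hvpos : 0 < ∑ i, Complex.normSq (v i) := by
    obtain ⟨i, hi⟩ := Function.ne_iff.1 hv0
    exact Finset.sum_pos' (fun i _ => Complex.normSq_nonneg _)
      ⟨i, Finset.mem_univ i, Complex.normSq_pos.2 hi⟩
  have : 0 < σ ^ 2 * ∑ i, Complex.normSq (v i) := by positivity
  linarith

lemma padT_mulVec (zh : Matrix (Fin n) (Fin k) ℂ) (u : Fin n → ℂ) :
    (padZero r zh)ᴴ *ᵥ u = fun j : Fin r =>
      if h : (j : ℕ) < k then (zhᴴ *ᵥ u) ⟨j, h⟩ else 0 := by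
  funext j
  by_cases h : (j : ℕ) < k
  · rw [dif_pos h]
    simp only [Matrix.mulVec, dotProduct, Matrix.conjTranspose_apply, padZero,
      Matrix.of_apply, dif_pos h]
  · rw [dif_neg h]
    simp only [Matrix.mulVec, dotProduct, Matrix.conjTranspose_apply, padZero,
      Matrix.of_apply, dif_neg h]
    simp

lemma padT_mulVec_eq_zero_iff (hkr : k ≤ r) (zh : Matrix (Fin n) (Fin k) ℂ) (u : Fin n → ℂ) :
    (padZero r zh)ᴴ *ᵥ u = 0 ↔ zhᴴ *ᵥ u = 0 := by
  rw [padT_mulVec]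
  constructor
  · intro h
    funext j'
    have hj : ((Fin.castLE hkr j' : Fin r) : ℕ) < k := j'.isLt
    have := congrFun h (Fin.castLE hkr j')
    rw [dif_pos hj] at this
    simpa [show (⟨((Fin.castLE hkr j' : Fin r) : ℕ), hj⟩ : Fin k) = j' from Fin.ext rfl] using this
  · intro h
    funext j
    by_cases hj : (j : ℕ) < k
    · rw [dif_pos hj, h]; rfl
    · rw [dif_neg hj]; rfl

lemma ker_transfer (hkr : k ≤ r) (zh : Matrix (Fin n) (Fin k) ℂ)
    (U : Matrix (Fin r) (Fin r) ℂ) (hU : U ∈ Matrix.unitaryGroup (Fin r) ℂ)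
    {z : Matrix (Fin n) (Fin r) ℂ} (hz : z = padZero r zh * U) (u : Fin n → ℂ) :
    zᴴ *ᵥ u = 0 ↔ zhᴴ *ᵥ u = 0 := by
  have hzT : zᴴ = Uᴴ * (padZero r zh)ᴴ := by rw [hz, Matrix.conjTranspose_mul]
  have hUU : U * Uᴴ = 1 := by
    have := (Matrix.mem_unitaryGroup_iff).1 hU
    rwa [Matrix.star_eq_conjTranspose] at this
  rw [hzT, ← Matrix.mulVec_mulVec]
  constructor
  · intro h
    have h2 : (padZero r zh)ᴴ *ᵥ u = 0 := by
      have h3 := congrArg (fun x => U *ᵥ x) h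
      simp only [Matrix.mulVec_mulVec, Matrix.mulVec_zero] at h3
      rwa [← Matrix.mul_assoc, hUU, Matrix.one_mul] at h3
    exact (padT_mulVec_eq_zero_iff hkr zh u).1 h2
  · intro h
    rw [(padT_mulVec_eq_zero_iff hkr zh u).2 h]
    simp

lemma fsq_pad (hkr : k ≤ r) (zh : Matrix (Fin n) (Fin k) ℂ) :
    fsq (padZero r zh) = fsq zh := by
  rw [fsq_eq_sum, fsq_eq_sum]
  rw [← sum_dite_fin hkr (fun j' => ∑ i, Complex.normSq (zh i j'))]
  refine Finset.sum_congr rfl fun j _ => ?_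
  by_cases hj : (j : ℕ) < k
  · rw [dif_pos hj]
    refine Finset.sum_congr rfl fun i _ => ?_
    simp [padZero, dif_pos hj]
  · rw [dif_neg hj]
    have : ∀ i, (padZero r zh) i j = 0 := fun i => by simp [padZero, dif_neg hj]
    simp [this]

lemma fsq_mul_unitary (x : Matrix (Fin n) (Fin r) ℂ)
    (U : Matrix (Fin r) (Fin r) ℂ) (hU : U ∈ Matrix.unitaryGroup (Fin r) ℂ) :
    fsq (x * U) = fsq x := by
  have hUU : U * Uᴴ = 1 := by
    have := (Matrix.mem_unitaryGroup_iff).1 hU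
    rwa [Matrix.star_eq_conjTranspose] at this
  rw [fsq, fsq, Matrix.conjTranspose_mul]
  have h1 : Uᴴ * xᴴ * (x * U) = Uᴴ * (xᴴ * x) * U := by
    simp [Matrix.mul_assoc]
  rw [h1, Matrix.trace_mul_cycle, ← Matrix.mul_assoc, hUU, Matrix.one_mul]

lemma star_single (i : Fin n) : star (Pi.single i (1:ℂ) : Fin n → ℂ) = Pi.single i (1:ℂ) := by
  funext p
  simp [Pi.single_apply, apply_ite (star : ℂ → ℂ)]

lemma entry_formula (A W B : Matrix (Fin n) (Fin n) ℂ) (i j : Fin n) :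
    star (Aᴴ *ᵥ Pi.single i 1) ⬝ᵥ (W *ᵥ (B *ᵥ Pi.single j 1)) = (A * W * B) i j := by
  rw [Matrix.star_mulVec, Matrix.conjTranspose_conjTranspose, star_single,
    Matrix.mulVec_mulVec, Matrix.dotProduct_mulVec, Matrix.vecMul_vecMul,
    Matrix.single_one_vecMul]
  rw [dotProduct_single, mul_one]
  rw [← Matrix.mul_assoc]
  rfl

lemma herm_of_horiz (zh : Matrix (Fin n) (Fin k) ℂ) (w : Matrix (Fin n) (Fin k) ℂ)
    (h : ∀ K : Matrix (Fin k) (Fin k) ℂ, Kᴴ = -K →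
      (Matrix.trace ((zh * K)ᴴ * w)).re = 0) :
    (zhᴴ * w)ᴴ = zhᴴ * w := by
  set M := zhᴴ * w with hMdef
  set K := M - Mᴴ with hKdef
  have hK : Kᴴ = -K := by simp [hKdef]
  have h0 : (Matrix.trace (Kᴴ * M)).re = 0 := by
    have := h K hK
    rwa [Matrix.conjTranspose_mul, Matrix.mul_assoc, ← hMdef] at this
  have hKM : (Matrix.trace (K * M)).re = 0 := by
    have : Matrix.trace (Kᴴ * M) = -Matrix.trace (K * M) := by rw [hK]; simp
    have h5 := congrArg Complex.re this
    rw [h0] at h5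
    simp at h5
    linarith [h5]
  have hKMH : (Matrix.trace (Kᴴ * Mᴴ)).re = 0 := by
    have e1 : Kᴴ * Mᴴ = (M * K)ᴴ := (Matrix.conjTranspose_mul M K).symm
    rw [e1, Matrix.trace_conjTranspose]
    have : (Matrix.trace (M * K)).re = (Matrix.trace (K * M)).re := by
      rw [Matrix.trace_mul_comm]
    simp [Complex.star_def, this, hKM]
  have hfsq : fsq K = 0 := by
    rw [fsq]
    have : Kᴴ * K = Kᴴ * M - Kᴴ * Mᴴ := by rw [hKdef, Matrix.mul_sub]
    rw [this, Matrix.trace_sub, Complex.sub_re, h0, hKMH]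
    ring
  have hK0 : K = 0 := eq_zero_of_fsq K (le_of_eq hfsq)
  have h6 : M - Mᴴ = 0 := hK0
  have := sub_eq_zero.1 h6
  exact this.symm

lemma sylvester_solve (G : Matrix (Fin k) (Fin k) ℂ) (hG : Gᴴ = G)
    (hpos : ∀ K : Matrix (Fin k) (Fin k) ℂ, K ≠ 0 →
      0 < (Matrix.trace (Kᴴ * (G * K + K * G))).re)
    (S : Matrix (Fin k) (Fin k) ℂ) (hS : Sᴴ = -S) :
    ∃ K : Matrix (Fin k) (Fin k) ℂ, Kᴴ = -K ∧ G * K + K * G = S := by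
  let L : Matrix (Fin k) (Fin k) ℂ →ₗ[ℂ] Matrix (Fin k) (Fin k) ℂ :=
    { toFun := fun K => G * K + K * G
      map_add' := fun x y => by
        simp [Matrix.mul_add, Matrix.add_mul]; abel
      map_smul' := fun c x => by
        simp [Matrix.mul_smul, Matrix.smul_mul, smul_add] }
  have hinj : Function.Injective L := by
    rw [← LinearMap.ker_eq_bot]
    refine LinearMap.ker_eq_bot'.2 fun K hK => ?_
    by_contra hne
    have := hpos K hne
    have hz : (G * K + K * G) = 0 := hK
    rw [hz] at this
    simp at this
  have hsurj : Function.Surjective L := (LinearMap.injective_iff_surjective).1 hinj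
  obtain ⟨K, hKS⟩ := hsurj S
  have hKS' : G * K + K * G = S := hKS
  have hskew : Kᴴ = -K := by
    have hLsum : L (K + Kᴴ) = 0 := by
      have e1 : L (K + Kᴴ) = (G * K + K * G) + (G * Kᴴ + Kᴴ * G) := by
        show G * (K + Kᴴ) + (K + Kᴴ) * G = _
        rw [Matrix.mul_add, Matrix.add_mul]
        abel
      have e2 : G * Kᴴ + Kᴴ * G = (G * K + K * G)ᴴ := by
        rw [Matrix.conjTranspose_add, Matrix.conjTranspose_mul, Matrix.conjTranspose_mul, hG]
        abel
      rw [e1, e2, hKS', hS]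
      abel
    have h0 : K + Kᴴ = 0 := by
      have : L (K + Kᴴ) = L 0 := by rw [hLsum]; simp
      exact hinj this
    exact add_eq_zero_iff_eq_neg.1 (by rwa [add_comm] at h0)
  exact ⟨K, hskew, hKS'⟩

end AGeoAux

set_option maxHeartbeats 1000000 in
theorem aGeo_aHat_local_bounds (n r k m : ℕ) (hk : 0 < k) (hkr : k ≤ r) (hrn : r ≤ n)
    (A : Fin m → Matrix (Fin n) (Fin n) ℂ) (hA : ∀ j, (A j).IsHermitian)
    (z : Matrix (Fin n) (Fin r) ℂ) (hzrank : z.rank = k)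
    (zh : Matrix (Fin n) (Fin k) ℂ) (hzhrank : zh.rank = k)
    (U : Matrix (Fin r) (Fin r) ℂ) (hU : U ∈ Matrix.unitaryGroup (Fin r) ℂ)
    (hz : z = padZero r zh * U)
    (σ : ℝ) (hσpos : 0 < σ)
    (hσ : σ ^ 2 = sInf {t : ℝ | ∃ v : Fin k → ℂ,
      (∑ i, Complex.normSq (v i)) = 1 ∧ t = ∑ i, Complex.normSq ((zh *ᵥ v) i)}) :
    (1 / (4 * frob z ^ 2)) * aHat A zh ≤ aGeo A z ∧
    aGeo A z ≤ (1 / (2 * σ ^ 2)) * aHat A zh := by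
  classical
  have i0 : Fin k := ⟨0, hk⟩
  have hb := AGeoAux.sigma_mulVec_bound zh σ hσ
  have hGdet : (zhᴴ * zh).det ≠ 0 := AGeoAux.G_det_ne_zero zh σ hσpos hb
  have hGunit : IsUnit (zhᴴ * zh).det := Ne.isUnit hGdet
  have hGGi : (zhᴴ * zh) * (zhᴴ * zh)⁻¹ = 1 := Matrix.mul_nonsing_inv _ hGunit
  have hGiG : (zhᴴ * zh)⁻¹ * (zhᴴ * zh) = 1 := Matrix.nonsing_inv_mul _ hGunit
  have hGh : (zhᴴ * zh)ᴴ = (zhᴴ * zh) := by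
    rw [Matrix.conjTranspose_mul, Matrix.conjTranspose_conjTranspose]
  have hGih : ((zhᴴ * zh)⁻¹)ᴴ = (zhᴴ * zh)⁻¹ := by rw [Matrix.conjTranspose_nonsing_inv, hGh]
  have hker : ∀ u, zᴴ *ᵥ u = 0 ↔ zhᴴ *ᵥ u = 0 := AGeoAux.ker_transfer hkr zh U hU hz
  have hfz : frob z = frob zh := by
    rw [AGeoAux.frob_eq_sqrt, AGeoAux.frob_eq_sqrt, hz,
      AGeoAux.fsq_mul_unitary _ U hU, AGeoAux.fsq_pad hkr]
  have hzh0 : zh ≠ 0 := by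
    intro h0
    have h1 := hb (Pi.single i0 1)
    rw [h0] at h1
    simp only [Matrix.zero_mulVec, Pi.zero_apply, Complex.normSq_zero,
      Finset.sum_const_zero] at h1
    have h2 : (∑ i, Complex.normSq ((Pi.single i0 1 : Fin k → ℂ) i)) = 1 := by
      simp [Pi.single_apply, apply_ite Complex.normSq]
    rw [h2, mul_one] at h1
    nlinarith
  have hfzh : 0 < frob zh := AGeoAux.frob_pos hzh0
  set SG := {t : ℝ | ∃ W : Matrix (Fin n) (Fin n) ℂ,
    tangentCond z W ∧ frob W = 1 ∧ t = ∑ j, rinner W (A j) ^ 2} with hSG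
  set SH := {t : ℝ | ∃ w : Matrix (Fin n) (Fin k) ℂ,
    (∀ K : Matrix (Fin k) (Fin k) ℂ, Kᴴ = -K →
      (Matrix.trace ((zh * K)ᴴ * w)).re = 0) ∧
    frob w = 1 ∧ t = ∑ j, rinner (zh * wᴴ + w * zhᴴ) (A j) ^ 2} with hSH
  have haG : aGeo A z = sInf SG := by unfold aGeo; rw [hSG]
  have haH : aHat A zh = sInf SH := by unfold aHat; rw [hSH]
  have hSGbdd : BddBelow SG := by
    refine ⟨0, fun t ht => ?_⟩
    obtain ⟨W, _, _, rfl⟩ := ht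
    exact Finset.sum_nonneg fun j _ => sq_nonneg _
  have hSHbdd : BddBelow SH := by
    refine ⟨0, fun t ht => ?_⟩
    obtain ⟨w, _, _, rfl⟩ := ht
    exact Finset.sum_nonneg fun j _ => sq_nonneg _
  -- SG nonempty
  have hSGne : SG.Nonempty := by
    have hXne : zh * zhᴴ ≠ 0 := by
      intro h0
      have h1 : Matrix.trace (zhᴴ * zh) = Matrix.trace (zh * zhᴴ) := Matrix.trace_mul_comm zhᴴ zh
      rw [h0, Matrix.trace_zero] at h1
      have h2 : AGeoAux.fsq zh = 0 := by rw [AGeoAux.fsq, h1, Complex.zero_re]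
      exact hzh0 (AGeoAux.eq_zero_of_fsq zh (le_of_eq h2))
    have hc0 : 0 < frob (zh * zhᴴ) := AGeoAux.frob_pos hXne
    refine ⟨∑ j, rinner ((((frob (zh * zhᴴ))⁻¹ : ℝ) : ℂ) • (zh * zhᴴ)) (A j) ^ 2,
      (((frob (zh * zhᴴ))⁻¹ : ℝ) : ℂ) • (zh * zhᴴ), ⟨?_, ?_⟩, ?_, rfl⟩
    · rw [Matrix.conjTranspose_smul]
      congr 1
      · exact Complex.conj_ofReal _
      · rw [Matrix.conjTranspose_mul, Matrix.conjTranspose_conjTranspose]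
    · intro u v _ hv
      have hv' := (hker v).1 hv
      rw [Matrix.smul_mulVec]
      have h3 : (zh * zhᴴ) *ᵥ v = 0 := by
        rw [← Matrix.mulVec_mulVec, hv', Matrix.mulVec_zero]
      rw [h3, smul_zero, dotProduct_zero]
    · rw [AGeoAux.frob_smul, abs_of_nonneg (inv_nonneg.2 (le_of_lt hc0)),
        inv_mul_cancel₀ (ne_of_gt hc0)]
  -- SH nonempty
  have hSHne : SH.Nonempty := by
    have h1ne : zh * (zhᴴ * zh)⁻¹ ≠ 0 := by
      intro h0
      have h1 : zhᴴ * (zh * (zhᴴ * zh)⁻¹) = 0 := by rw [h0, Matrix.mul_zero]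
      rw [← Matrix.mul_assoc, hGGi] at h1
      have h2 := congrFun (congrFun h1 i0) i0
      rw [Matrix.one_apply_eq, Matrix.zero_apply] at h2
      exact one_ne_zero h2
    have hc1 : 0 < frob (zh * (zhᴴ * zh)⁻¹) := AGeoAux.frob_pos h1ne
    refine ⟨_, (((frob (zh * (zhᴴ * zh)⁻¹))⁻¹ : ℝ) : ℂ) • (zh * (zhᴴ * zh)⁻¹), ?_, ?_, rfl⟩
    · intro K' hK'
      rw [Matrix.mul_smul, Matrix.trace_smul]
      have he1 : zhᴴ * (zh * (zhᴴ * zh)⁻¹) = 1 := by rw [← Matrix.mul_assoc, hGGi]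
      have hherm : (zhᴴ * (zh * (zhᴴ * zh)⁻¹))ᴴ = zhᴴ * (zh * (zhᴴ * zh)⁻¹) := by
        rw [he1, Matrix.conjTranspose_one]
      have h2 : (Matrix.trace ((zh * K')ᴴ * (zh * (zhᴴ * zh)⁻¹))).re = 0 := by
        rw [Matrix.conjTranspose_mul, Matrix.mul_assoc]
        exact AGeoAux.rtrace_skew_herm hK' hherm
      rw [smul_eq_mul, Complex.re_ofReal_mul, h2, mul_zero]
    · rw [AGeoAux.frob_smul, abs_of_nonneg (inv_nonneg.2 (le_of_lt hc1)),
        inv_mul_cancel₀ (ne_of_gt hc1)]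
  constructor
  · -- LOWER BOUND
    rw [haG]
    refine le_csInf hSGne ?_
    rintro s ⟨W, ⟨hWh, hWker⟩, hWn, rfl⟩
    have hPh : (zh * (zhᴴ * zh)⁻¹ * zhᴴ)ᴴ = zh * (zhᴴ * zh)⁻¹ * zhᴴ := by
      simp only [Matrix.conjTranspose_mul, Matrix.conjTranspose_conjTranspose, hGih,
        Matrix.mul_assoc]
    have hzhQ : zhᴴ * (1 - zh * (zhᴴ * zh)⁻¹ * zhᴴ) = 0 := by
      rw [Matrix.mul_sub, Matrix.mul_one]
      have e : zhᴴ * (zh * (zhᴴ * zh)⁻¹ * zhᴴ) = zhᴴ := by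
        calc zhᴴ * (zh * (zhᴴ * zh)⁻¹ * zhᴴ) = (zhᴴ * zh) * ((zhᴴ * zh)⁻¹ * zhᴴ) := by
              simp only [Matrix.mul_assoc]
          _ = ((zhᴴ * zh) * (zhᴴ * zh)⁻¹) * zhᴴ := by rw [← Matrix.mul_assoc]
          _ = zhᴴ := by rw [hGGi, Matrix.one_mul]
      rw [e, sub_self]
    have hQWQ : (1 - zh * (zhᴴ * zh)⁻¹ * zhᴴ) * W * (1 - zh * (zhᴴ * zh)⁻¹ * zhᴴ) = 0 := by
      ext i j
      rw [Matrix.zero_apply, ← AGeoAux.entry_formula]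
      apply hWker
      · apply (hker _).2
        rw [Matrix.mulVec_mulVec]
        have e : zhᴴ * (1 - zh * (zhᴴ * zh)⁻¹ * zhᴴ)ᴴ = 0 := by
          have e2 : (1 - zh * (zhᴴ * zh)⁻¹ * zhᴴ)ᴴ = 1 - zh * (zhᴴ * zh)⁻¹ * zhᴴ := by
            rw [Matrix.conjTranspose_sub, Matrix.conjTranspose_one, hPh]
          rw [e2]; exact hzhQ
        rw [e, Matrix.zero_mulVec]
      · apply (hker _).2
        rw [Matrix.mulVec_mulVec, hzhQ, Matrix.zero_mulVec]
    have hWid : W = zh * (zhᴴ * zh)⁻¹ * zhᴴ * W + W * (zh * (zhᴴ * zh)⁻¹ * zhᴴ)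
        - zh * (zhᴴ * zh)⁻¹ * zhᴴ * W * (zh * (zhᴴ * zh)⁻¹ * zhᴴ) := by
      have e2 : W - (zh * (zhᴴ * zh)⁻¹ * zhᴴ * W + W * (zh * (zhᴴ * zh)⁻¹ * zhᴴ)
          - zh * (zhᴴ * zh)⁻¹ * zhᴴ * W * (zh * (zhᴴ * zh)⁻¹ * zhᴴ))
          = (1 - zh * (zhᴴ * zh)⁻¹ * zhᴴ) * W * (1 - zh * (zhᴴ * zh)⁻¹ * zhᴴ) := by noncomm_ring
      rw [hQWQ] at e2
      exact sub_eq_zero.1 e2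
    have hstar2 : star ((2:ℂ)⁻¹) = (2:ℂ)⁻¹ := by
      rw [star_inv₀]
      norm_num
    set w0 : Matrix (Fin n) (Fin k) ℂ :=
      W * zh * (zhᴴ * zh)⁻¹ - (2:ℂ)⁻¹ • (zh * (zhᴴ * zh)⁻¹ * zhᴴ * W * zh * (zhᴴ * zh)⁻¹) with hw0
    have t1 : zh * w0ᴴ = zh * (zhᴴ * zh)⁻¹ * zhᴴ * W
        - (2:ℂ)⁻¹ • (zh * (zhᴴ * zh)⁻¹ * zhᴴ * W * (zh * (zhᴴ * zh)⁻¹ * zhᴴ)) := by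
      rw [hw0, Matrix.conjTranspose_sub, Matrix.conjTranspose_smul, hstar2, Matrix.mul_sub,
        Matrix.mul_smul]
      congr 1
      · simp only [Matrix.conjTranspose_mul, Matrix.conjTranspose_conjTranspose, hGih, hWh,
          hPh, Matrix.mul_assoc]
      · congr 1
        simp only [Matrix.conjTranspose_mul, Matrix.conjTranspose_conjTranspose, hGih, hWh,
          hPh, Matrix.mul_assoc]
    have t2 : w0 * zhᴴ = W * (zh * (zhᴴ * zh)⁻¹ * zhᴴ)
        - (2:ℂ)⁻¹ • (zh * (zhᴴ * zh)⁻¹ * zhᴴ * W * (zh * (zhᴴ * zh)⁻¹ * zhᴴ)) := by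
      rw [hw0, Matrix.sub_mul, Matrix.smul_mul]
      congr 1
      · simp only [Matrix.mul_assoc]
      · congr 1
        simp only [Matrix.mul_assoc]
    have hid0 : zh * w0ᴴ + w0 * zhᴴ = W := by
      rw [t1, t2]
      conv_rhs => rw [hWid]
      module
    -- Sylvester
    have hsylpos : ∀ K : Matrix (Fin k) (Fin k) ℂ, K ≠ 0 →
        0 < (Matrix.trace (Kᴴ * ((zhᴴ * zh) * K + K * (zhᴴ * zh)))).re := by
      intro K hK
      have e1 : Kᴴ * ((zhᴴ * zh) * K + K * (zhᴴ * zh)) = Kᴴ * ((zhᴴ * zh) * K) + Kᴴ * (K * (zhᴴ * zh)) := by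
        rw [Matrix.mul_add]
      rw [e1, Matrix.trace_add, Complex.add_re]
      have e2 : (Matrix.trace (Kᴴ * ((zhᴴ * zh) * K))).re = AGeoAux.fsq (zh * K) := by
        have e : Kᴴ * ((zhᴴ * zh) * K) = (zh * K)ᴴ * (zh * K) := by
          simp only [Matrix.conjTranspose_mul, Matrix.mul_assoc]
        rw [e]; rfl
      have e3 : (Matrix.trace (Kᴴ * (K * (zhᴴ * zh)))).re = AGeoAux.fsq (zh * Kᴴ) := by
        rw [Matrix.trace_mul_comm]
        have e : (K * (zhᴴ * zh)) * Kᴴ = (zh * Kᴴ)ᴴ * (zh * Kᴴ) := by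
          simp only [Matrix.conjTranspose_mul, Matrix.conjTranspose_conjTranspose,
            Matrix.mul_assoc]
        rw [e]; rfl
      rw [e2, e3]
      have h5 := AGeoAux.fsq_zh_mul zh σ hb K
      have h6 := AGeoAux.fsq_zh_mul zh σ hb Kᴴ
      have h7 : 0 < AGeoAux.fsq K := by
        rcases lt_or_ge 0 (AGeoAux.fsq K) with h | h
        · exact h
        · exact absurd (AGeoAux.eq_zero_of_fsq K h) hK
      have h8 : AGeoAux.fsq Kᴴ = AGeoAux.fsq K := AGeoAux.fsq_conjT K
      have h9 : 0 < σ ^ 2 := pow_pos hσpos 2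
      nlinarith [h5, h6, h7, h8, h9]
    obtain ⟨K, hKskew, hKeq⟩ := AGeoAux.sylvester_solve (zhᴴ * zh) hGh hsylpos
      ((zhᴴ * w0) - (zhᴴ * w0)ᴴ) (by rw [Matrix.conjTranspose_sub,
        Matrix.conjTranspose_conjTranspose]; abel)
    set w : Matrix (Fin n) (Fin k) ℂ := w0 - zh * K with hwdef
    have hMw : (zhᴴ * w)ᴴ = zhᴴ * w := by
      have e1 : zhᴴ * w = zhᴴ * w0 - (zhᴴ * zh) * K := by
        rw [hwdef, Matrix.mul_sub, ← Matrix.mul_assoc]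
      have e2 : (zhᴴ * w0 - (zhᴴ * zh) * K)ᴴ = (zhᴴ * w0)ᴴ + K * (zhᴴ * zh) := by
        rw [Matrix.conjTranspose_sub, Matrix.conjTranspose_mul (zhᴴ * zh) K, hGh, hKskew,
          Matrix.neg_mul, sub_neg_eq_add]
      have e3 : K * (zhᴴ * zh) = zhᴴ * w0 - (zhᴴ * w0)ᴴ - (zhᴴ * zh) * K := eq_sub_of_add_eq' hKeq
      rw [e1, e2, e3]
      abel
    have hwid : zh * wᴴ + w * zhᴴ = W := by
      have hK0 : Kᴴ + K = 0 := by rw [hKskew]; abel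
      calc zh * wᴴ + w * zhᴴ
          = (zh * w0ᴴ - zh * (Kᴴ * zhᴴ)) + (w0 * zhᴴ - zh * (K * zhᴴ)) := by
            rw [hwdef]
            simp only [Matrix.conjTranspose_sub, Matrix.conjTranspose_mul, Matrix.mul_sub,
              Matrix.sub_mul, Matrix.mul_assoc]
        _ = (zh * w0ᴴ + w0 * zhᴴ) - zh * ((Kᴴ + K) * zhᴴ) := by
            rw [Matrix.add_mul, Matrix.mul_add]
            abel
        _ = W := by rw [hK0, Matrix.zero_mul, Matrix.mul_zero, sub_zero, hid0]
    have hwne : w ≠ 0 := by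
      intro h0
      rw [h0] at hwid
      simp only [Matrix.conjTranspose_zero, Matrix.mul_zero, Matrix.zero_mul, add_zero] at hwid
      rw [← hwid] at hWn
      rw [AGeoAux.frob_zero] at hWn
      norm_num at hWn
    have hfw : 0 < frob w := AGeoAux.frob_pos hwne
    have hnormbound : 1 ≤ 2 * frob zh * frob w := by
      have h1 : frob (zh * wᴴ + w * zhᴴ) ≤ frob (zh * wᴴ) + frob (w * zhᴴ) :=
        AGeoAux.frob_add_le _ _
      have h2 : frob (zh * wᴴ) ≤ frob zh * frob wᴴ := AGeoAux.frob_mul_le _ _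
      have h3 : frob (w * zhᴴ) ≤ frob w * frob zhᴴ := AGeoAux.frob_mul_le _ _
      rw [AGeoAux.frob_conjT] at h2 h3
      rw [hwid, hWn] at h1
      linarith
    set cw := frob w with hcw
    have hhorizW : ∀ K' : Matrix (Fin k) (Fin k) ℂ, K'ᴴ = -K' →
        (Matrix.trace ((zh * K')ᴴ * (((cw⁻¹ : ℝ) : ℂ) • w))).re = 0 := by
      intro K' hK'
      rw [Matrix.mul_smul, Matrix.trace_smul]
      have h2 : (Matrix.trace ((zh * K')ᴴ * w)).re = 0 := by
        rw [Matrix.conjTranspose_mul, Matrix.mul_assoc]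
        exact AGeoAux.rtrace_skew_herm hK' hMw
      rw [smul_eq_mul, Complex.re_ofReal_mul, h2, mul_zero]
    have hWnorm' : frob (((cw⁻¹ : ℝ) : ℂ) • w) = 1 := by
      rw [AGeoAux.frob_smul, abs_of_nonneg (inv_nonneg.2 (le_of_lt hfw)), ← hcw,
        inv_mul_cancel₀ (ne_of_gt hfw)]
    have hstarc : star (((cw⁻¹ : ℝ) : ℂ)) = ((cw⁻¹ : ℝ) : ℂ) := Complex.conj_ofReal _
    have hexpr : zh * ((((cw⁻¹ : ℝ) : ℂ) • w))ᴴ + (((cw⁻¹ : ℝ) : ℂ) • w) * zhᴴ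
        = ((cw⁻¹ : ℝ) : ℂ) • W := by
      rw [Matrix.conjTranspose_smul, hstarc, Matrix.mul_smul, Matrix.smul_mul, ← smul_add, hwid]
    have hmemH : ((cw ^ 2)⁻¹ * ∑ j, rinner W (A j) ^ 2) ∈ SH := by
      refine ⟨(((cw⁻¹ : ℝ) : ℂ) • w), hhorizW, hWnorm', ?_⟩
      rw [hexpr]
      simp only [AGeoAux.rinner_smul_left, mul_pow, ← Finset.mul_sum, inv_pow]
    have hHatle : aHat A zh ≤ (cw ^ 2)⁻¹ * ∑ j, rinner W (A j) ^ 2 := by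
      rw [haH]
      exact csInf_le hSHbdd hmemH
    have hs0 : 0 ≤ ∑ j, rinner W (A j) ^ 2 := Finset.sum_nonneg fun j _ => sq_nonneg _
    have hfzpos : 0 < frob z := by rw [hfz]; exact hfzh
    have hchain : 1 / (4 * frob z ^ 2) * aHat A zh
        ≤ 1 / (4 * frob z ^ 2) * ((cw ^ 2)⁻¹ * ∑ j, rinner W (A j) ^ 2) :=
      mul_le_mul_of_nonneg_left hHatle (by positivity)
    refine le_trans hchain ?_
    have hkey : 1 ≤ 4 * frob z ^ 2 * cw ^ 2 := by
      rw [hfz]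
      nlinarith [hnormbound, hfzh, hfw]
    have heq : 1 / (4 * frob z ^ 2) * ((cw ^ 2)⁻¹ * ∑ j, rinner W (A j) ^ 2)
        = (∑ j, rinner W (A j) ^ 2) / (4 * frob z ^ 2 * cw ^ 2) := by
      field_simp
    rw [heq, div_le_iff₀ (by positivity)]
    nlinarith [hkey, hs0]
  · -- UPPER BOUND
    have h2σ : (0:ℝ) < 2 * σ ^ 2 := by positivity
    have key : ∀ t ∈ SH, 2 * σ ^ 2 * aGeo A z ≤ t := by
      rintro t ⟨w, hwh, hwn, rfl⟩
      have hM := AGeoAux.herm_of_horiz zh w hwh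
      have h4 : 0 ≤ rinner (zh * wᴴ) (w * zhᴴ) := by
        have e0 : rinner (zh * wᴴ) (w * zhᴴ)
            = (Matrix.trace ((zh * wᴴ)ᴴ * (w * zhᴴ))).re := rfl
        have e1 : (zh * wᴴ)ᴴ = w * zhᴴ := by
          rw [Matrix.conjTranspose_mul, Matrix.conjTranspose_conjTranspose]
        have e2 : Matrix.trace ((w * zhᴴ) * (w * zhᴴ)) =
            Matrix.trace ((zhᴴ * w) * (zhᴴ * w)) := by
          rw [show (w * zhᴴ) * (w * zhᴴ) = w * (zhᴴ * (w * zhᴴ)) by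
                simp only [Matrix.mul_assoc],
              Matrix.trace_mul_comm,
              show (zhᴴ * (w * zhᴴ)) * w = (zhᴴ * w) * (zhᴴ * w) by
                simp only [Matrix.mul_assoc]]
        have e3 : (zhᴴ * w) * (zhᴴ * w) = (zhᴴ * w)ᴴ * (zhᴴ * w) := by rw [hM]
        rw [e0, e1, e2, e3]
        exact AGeoAux.fsq_nonneg (zhᴴ * w)
      have h5 := AGeoAux.fsq_zh_mul zh σ hb wᴴ
      have h6 : AGeoAux.fsq wᴴ = 1 := by
        rw [AGeoAux.fsq_conjT, ← AGeoAux.frob_sq, hwn]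
        norm_num
      rw [h6, mul_one] at h5
      have h3 : AGeoAux.fsq (w * zhᴴ) = AGeoAux.fsq (zh * wᴴ) := by
        rw [show w * zhᴴ = (zh * wᴴ)ᴴ by
          rw [Matrix.conjTranspose_mul, Matrix.conjTranspose_conjTranspose],
          AGeoAux.fsq_conjT]
      have h1 := AGeoAux.fsq_add (zh * wᴴ) (w * zhᴴ)
      have hYfsq : 2 * σ ^ 2 ≤ AGeoAux.fsq (zh * wᴴ + w * zhᴴ) := by linarith
      have hYpos : 0 < frob (zh * wᴴ + w * zhᴴ) := by
        rw [AGeoAux.frob_eq_sqrt]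
        exact Real.sqrt_pos.2 (by nlinarith)
      set c := frob (zh * wᴴ + w * zhᴴ) with hc
      have hstarc : star (((c⁻¹ : ℝ) : ℂ)) = ((c⁻¹ : ℝ) : ℂ) := Complex.conj_ofReal _
      have htang : tangentCond z (((c⁻¹ : ℝ) : ℂ) • (zh * wᴴ + w * zhᴴ)) := by
        constructor
        · rw [Matrix.conjTranspose_smul, hstarc]
          congr 1
          rw [Matrix.conjTranspose_add, Matrix.conjTranspose_mul, Matrix.conjTranspose_mul,
            Matrix.conjTranspose_conjTranspose, Matrix.conjTranspose_conjTranspose]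
          abel
        · intro u v hu hv
          have hu' := (hker u).1 hu
          have hv' := (hker v).1 hv
          rw [Matrix.smul_mulVec, Matrix.add_mulVec]
          have e1 : (zh * wᴴ) *ᵥ v = zh *ᵥ (wᴴ *ᵥ v) := (Matrix.mulVec_mulVec _ _ _).symm
          have e2 : (w * zhᴴ) *ᵥ v = w *ᵥ (zhᴴ *ᵥ v) := (Matrix.mulVec_mulVec _ _ _).symm
          rw [e1, e2, hv', Matrix.mulVec_zero, add_zero]
          rw [dotProduct_smul, Matrix.dotProduct_mulVec]
          have e3 : star u ᵥ* zh = star (zhᴴ *ᵥ u) := by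
            rw [Matrix.star_mulVec, Matrix.conjTranspose_conjTranspose]
          rw [e3, hu']
          simp
      have hnorm1 : frob (((c⁻¹ : ℝ) : ℂ) • (zh * wᴴ + w * zhᴴ)) = 1 := by
        rw [AGeoAux.frob_smul, abs_of_nonneg (inv_nonneg.2 (le_of_lt hYpos)), ← hc,
          inv_mul_cancel₀ (ne_of_gt hYpos)]
      have hmemG : ((c ^ 2)⁻¹ * ∑ j, rinner (zh * wᴴ + w * zhᴴ) (A j) ^ 2) ∈ SG := by
        refine ⟨((c⁻¹ : ℝ) : ℂ) • (zh * wᴴ + w * zhᴴ), htang, hnorm1, ?_⟩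
        simp only [AGeoAux.rinner_smul_left, mul_pow, ← Finset.mul_sum, inv_pow]
      have hGle : aGeo A z ≤ (c ^ 2)⁻¹ * ∑ j, rinner (zh * wᴴ + w * zhᴴ) (A j) ^ 2 := by
        rw [haG]
        exact csInf_le hSGbdd hmemG
      have hc2 : 2 * σ ^ 2 ≤ c ^ 2 := by rw [hc, AGeoAux.frob_sq]; exact hYfsq
      have ht0 : 0 ≤ ∑ j, rinner (zh * wᴴ + w * zhᴴ) (A j) ^ 2 :=
        Finset.sum_nonneg fun j _ => sq_nonneg _
      have h8 : (c ^ 2)⁻¹ * (∑ j, rinner (zh * wᴴ + w * zhᴴ) (A j) ^ 2)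
          ≤ (2 * σ ^ 2)⁻¹ * (∑ j, rinner (zh * wᴴ + w * zhᴴ) (A j) ^ 2) :=
        mul_le_mul_of_nonneg_right (inv_anti₀ h2σ hc2) ht0
      have h9 : aGeo A z ≤ (2 * σ ^ 2)⁻¹ * (∑ j, rinner (zh * wᴴ + w * zhᴴ) (A j) ^ 2) :=
        le_trans hGle h8
      calc 2 * σ ^ 2 * aGeo A z
          ≤ 2 * σ ^ 2 * ((2 * σ ^ 2)⁻¹ * (∑ j, rinner (zh * wᴴ + w * zhᴴ) (A j) ^ 2)) :=
            mul_le_mul_of_nonneg_left h9 (le_of_lt h2σ)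
        _ = ∑ j, rinner (zh * wᴴ + w * zhᴴ) (A j) ^ 2 := by field_simp
    have h1 : 2 * σ ^ 2 * aGeo A z ≤ aHat A zh := by
      rw [haH]
      exact le_csInf hSHne key
    calc aGeo A z = (2 * σ ^ 2)⁻¹ * (2 * σ ^ 2 * aGeo A z) := by field_simp
      _ ≤ (2 * σ ^ 2)⁻¹ * aHat A zh := mul_le_mul_of_nonneg_left h1 (by positivity)
      _ = 1 / (2 * σ ^ 2) * aHat A zh := by rw [one_div]
end

section
/- Let A₁, …, A_m be positive semidefinite Hermitian n×n matrices forming a frame, with optimal upper frame bound B = sup_{w ∈ ℂ^{n×r}, w ≠ 0} (1/‖w‖₂²) Σ_{j=1}^m ⟨w w*, A_j⟩_ℝ. Define α_j(x) = ⟨x x*, A_j⟩_ℝ^{1/2} and θ(x) = (x x*)^{1/2}. Then the optimal squared global upper Lipschitz constant B₀ := sup { Σ_{j=1}^m (α_j(x) − α_j(y))² / ‖θ(x) − θ(y)‖₂² : x, y ∈ ℂ^{n×r}, θ(x) ≠ θ(y) } satisfies B₀ = B. -/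
open Matrix Filter
open scoped ComplexOrder

attribute [local instance] Matrix.frobeniusSeminormedAddCommGroup Matrix.frobeniusNormedAddCommGroup

lemma Matrix.PosSemidef.posSemidef_sqrt {n 𝕜 : Type*} [Fintype n] [DecidableEq n] [RCLike 𝕜]
    {A : Matrix n n 𝕜} (hA : A.PosSemidef) : hA.sqrt.PosSemidef := by
  unfold Matrix.PosSemidef.sqrt
  apply PosSemidef.mul_mul_conjTranspose_same
  refine posSemidef_diagonal_iff.mpr fun i => ?_
  simp only [Function.comp_apply]
  exact RCLike.ofReal_nonneg.mpr (Real.sqrt_nonneg _)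

lemma Matrix.PosSemidef.sqrt_mul_self {n 𝕜 : Type*} [Fintype n] [DecidableEq n] [RCLike 𝕜]
    {A : Matrix n n 𝕜} (hA : A.PosSemidef) : hA.sqrt * hA.sqrt = A := by
  unfold Matrix.PosSemidef.sqrt
  have hC : (star hA.1.eigenvectorUnitary : Matrix n n 𝕜) * hA.1.eigenvectorUnitary.1 = 1 :=
    Unitary.coe_star_mul_self _
  conv_rhs => rw [hA.1.spectral_theorem, Unitary.conjStarAlgAut_apply]
  have hD : diagonal ((↑) ∘ (√·) ∘ hA.1.eigenvalues : n → 𝕜) *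
      diagonal ((↑) ∘ (√·) ∘ hA.1.eigenvalues) = diagonal (RCLike.ofReal ∘ hA.1.eigenvalues) := by
    rw [diagonal_mul_diagonal]
    congr 1; funext i
    simp only [Function.comp_apply]
    rw [← RCLike.ofReal_mul, Real.mul_self_sqrt (hA.eigenvalues_nonneg i)]
  calc _ = hA.1.eigenvectorUnitary.1 * diagonal ((↑) ∘ (√·) ∘ hA.1.eigenvalues) *
      ((star hA.1.eigenvectorUnitary : Matrix n n 𝕜) * hA.1.eigenvectorUnitary.1) *
      diagonal ((↑) ∘ (√·) ∘ hA.1.eigenvalues) * (star hA.1.eigenvectorUnitary : Matrix n n 𝕜) := by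
        simp only [Matrix.mul_assoc]
    _ = _ := by rw [hC, Matrix.mul_one, Matrix.mul_assoc _ (diagonal _) (diagonal _), hD]

lemma retr {p q : ℕ} (x : Matrix (Fin p) (Fin q) ℂ) :
    (Matrix.trace (xᴴ * x)).re = ∑ k, ∑ i, Complex.normSq (x i k) := by
  simp [Matrix.trace, Matrix.mul_apply, Matrix.diag, Complex.re_sum, Complex.normSq_apply,
    Complex.mul_re]

lemma frob_eq_norm {p q : ℕ} (x : Matrix (Fin p) (Fin q) ℂ) : frob x = ‖x‖ := by
  rw [frob, Matrix.frobenius_norm_def, retr, ← Real.sqrt_eq_rpow]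
  congr 1
  rw [Finset.sum_comm]
  refine Finset.sum_congr rfl fun i _ => Finset.sum_congr rfl fun k _ => ?_
  rw [show ((2:ℝ)) = ((2:ℕ):ℝ) by norm_num, Real.rpow_natCast,
    Complex.sq_norm]

lemma frob_nonneg {p q : ℕ} (x : Matrix (Fin p) (Fin q) ℂ) : 0 ≤ frob x := Real.sqrt_nonneg _

lemma frob_sq {p q : ℕ} (x : Matrix (Fin p) (Fin q) ℂ) :
    frob x ^ 2 = (Matrix.trace (xᴴ * x)).re := by
  rw [frob, Real.sq_sqrt, retr]
  rw [retr]
  exact Finset.sum_nonneg fun k _ => Finset.sum_nonneg fun i _ => Complex.normSq_nonneg _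

lemma frob_pos {p q : ℕ} {x : Matrix (Fin p) (Fin q) ℂ} (hx : x ≠ 0) : 0 < frob x := by
  rw [frob_eq_norm]; exact norm_pos_iff.mpr hx

lemma frob_sub_frob {p q : ℕ} (a b : Matrix (Fin p) (Fin q) ℂ) :
    |frob a - frob b| ≤ frob (a - b) := by
  simp only [frob_eq_norm]; exact abs_norm_sub_norm_le a b

lemma rinner_outer {p q : ℕ} (x : Matrix (Fin p) (Fin q) ℂ) {M : Matrix (Fin p) (Fin p) ℂ}
    (hM : M.PosSemidef) : rinner (x * xᴴ) M = frob (hM.sqrt * x) ^ 2 := by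
  rw [frob_sq, rinner]
  have h1 : (x * xᴴ)ᴴ = x * xᴴ := by
    rw [Matrix.conjTranspose_mul, Matrix.conjTranspose_conjTranspose]
  have hH : hM.sqrtᴴ = hM.sqrt := hM.posSemidef_sqrt.1
  have h2 : (hM.sqrt * x)ᴴ * (hM.sqrt * x) = xᴴ * M * x := by
    rw [Matrix.conjTranspose_mul, hH, Matrix.mul_assoc, ← Matrix.mul_assoc hM.sqrt,
      hM.sqrt_mul_self, ← Matrix.mul_assoc]
  rw [h1, h2, Matrix.trace_mul_comm (xᴴ * M) x, ← Matrix.mul_assoc]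

lemma rinner_outer_nonneg {p q : ℕ} (x : Matrix (Fin p) (Fin q) ℂ)
    {M : Matrix (Fin p) (Fin p) ℂ} (hM : M.PosSemidef) : 0 ≤ rinner (x * xᴴ) M := by
  rw [rinner_outer x hM]; positivity

lemma theta_mul_theta {n r : ℕ} (x : Matrix (Fin n) (Fin r) ℂ) :
    theta x * (theta x)ᴴ = x * xᴴ := by
  rw [theta, (Matrix.posSemidef_self_mul_conjTranspose x).posSemidef_sqrt.1,
    (Matrix.posSemidef_self_mul_conjTranspose x).sqrt_mul_self]

lemma theta_herm {n r : ℕ} (x : Matrix (Fin n) (Fin r) ℂ) : (theta x)ᴴ = theta x :=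
  (Matrix.posSemidef_self_mul_conjTranspose x).posSemidef_sqrt.1

lemma frob_theta {n r : ℕ} (x : Matrix (Fin n) (Fin r) ℂ) : frob (theta x) = frob x := by
  rw [frob, frob]
  rw [show (theta x)ᴴ * theta x = theta x * (theta x)ᴴ by rw [theta_herm]]
  rw [theta_mul_theta, Matrix.trace_mul_comm]

lemma theta_zero {n r : ℕ} : theta (0 : Matrix (Fin n) (Fin r) ℂ) = 0 := by
  have h0 : Matrix.PosSemidef (0 : Matrix (Fin n) (Fin n) ℂ) := Matrix.PosSemidef.zero
  have hsq : theta (0 : Matrix (Fin n) (Fin r) ℂ) ^ 2 = (0 : Matrix (Fin n) (Fin n) ℂ) ^ 2 := by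
    calc theta (0 : Matrix (Fin n) (Fin r) ℂ) ^ 2
        = theta (0 : Matrix (Fin n) (Fin r) ℂ) * (theta 0)ᴴ := by rw [pow_two, theta_herm]
      _ = (0 : Matrix (Fin n) (Fin r) ℂ) * (0 : Matrix (Fin n) (Fin r) ℂ)ᴴ := theta_mul_theta 0
      _ = (0 : Matrix (Fin n) (Fin n) ℂ) ^ 2 := by simp [pow_two]
  exact conjTranspose_mul_self_eq_zero.mp (by rw [theta_herm, ← pow_two, hsq]; simp)

lemma theta_ne_zero {n r : ℕ} {x : Matrix (Fin n) (Fin r) ℂ} (hx : x ≠ 0) : theta x ≠ 0 := by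
  intro h
  have := frob_theta x
  rw [h] at this
  have h2 : frob (0 : Matrix (Fin n) (Fin n) ℂ) = 0 := by rw [frob_eq_norm, norm_zero]
  exact absurd (this.symm.trans h2) (ne_of_gt (frob_pos hx))

lemma alpha_eq {n r : ℕ} (x : Matrix (Fin n) (Fin r) ℂ) {M : Matrix (Fin n) (Fin n) ℂ}
    (hM : M.PosSemidef) :
    Real.sqrt (rinner (x * xᴴ) M) = frob (hM.sqrt * theta x) := by
  rw [← theta_mul_theta x, rinner_outer (theta x) hM, Real.sqrt_sq (frob_nonneg _)]

lemma rinner_sum_left {p q : ℕ} {ι : Type*} (s : Finset ι) (f : ι → Matrix (Fin p) (Fin q) ℂ)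
    (M : Matrix (Fin p) (Fin q) ℂ) :
    rinner (∑ i ∈ s, f i) M = ∑ i ∈ s, rinner (f i) M := by
  rw [rinner, Matrix.conjTranspose_sum, Matrix.sum_mul, Matrix.trace_sum, Complex.re_sum]
  rfl

lemma sum_outer_le {n r m : ℕ} (k0 : Fin r) (A : Fin m → Matrix (Fin n) (Fin n) ℂ) (B : ℝ)
    (hup : ∀ z : Matrix (Fin n) (Fin r) ℂ, ∑ j, rinner (z * zᴴ) (A j) ≤ B * frob z ^ 2)
    (Δ : Matrix (Fin n) (Fin n) ℂ) :
    ∑ j, rinner (Δ * Δᴴ) (A j) ≤ B * frob Δ ^ 2 := by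
  set z : Fin n → Matrix (Fin n) (Fin r) ℂ :=
    fun c => Matrix.of fun i k => if k = k0 then Δ i c else 0 with hz
  have hdecomp : Δ * Δᴴ = ∑ c, z c * (z c)ᴴ := by
    ext i i'
    simp [hz, Matrix.mul_apply, Matrix.sum_apply, Matrix.conjTranspose_apply,
      apply_ite (star : ℂ → ℂ), ite_mul, mul_ite, Finset.sum_ite_eq', Finset.sum_comm (γ := Fin r)]
  have hfrob : ∑ c, frob (z c) ^ 2 = frob Δ ^ 2 := by
    simp only [frob_sq, retr, hz]
    simp [apply_ite Complex.normSq, Finset.sum_ite_eq']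
  calc ∑ j, rinner (Δ * Δᴴ) (A j) = ∑ j, ∑ c, rinner (z c * (z c)ᴴ) (A j) := by
        refine Finset.sum_congr rfl fun j _ => ?_
        rw [hdecomp, rinner_sum_left]
    _ = ∑ c, ∑ j, rinner (z c * (z c)ᴴ) (A j) := Finset.sum_comm
    _ ≤ ∑ c, B * frob (z c) ^ 2 := Finset.sum_le_sum fun c _ => hup (z c)
    _ = B * frob Δ ^ 2 := by rw [← Finset.mul_sum, hfrob]

/-- for a frame of positive semidefinite matrices `A_j` with optimal upper
frame bound `B`, the squared global upper Lipschitz constant `B₀` of the `α` analysis map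
`α_j(x) = ⟨x x*, A_j⟩_ℝ^{1/2}` relative to `‖θ(x) − θ(y)‖₂` equals `B`. -/
theorem alpha_upper_lipschitz_eq_frame_bound (n r m : ℕ) (hr : 1 ≤ r) (hrn : r ≤ n)
    (A : Fin m → Matrix (Fin n) (Fin n) ℂ) (hA : ∀ j, (A j).PosSemidef)
    (B : ℝ)
    (hframe : ∃ a : ℝ, 0 < a ∧ a ≤ B ∧ ∀ z : Matrix (Fin n) (Fin r) ℂ,
      a * frob z ^ 2 ≤ ∑ j, rinner (z * zᴴ) (A j) ∧
      ∑ j, rinner (z * zᴴ) (A j) ≤ B * frob z ^ 2)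
    (hB : B = sSup {t : ℝ | ∃ w : Matrix (Fin n) (Fin r) ℂ, w ≠ 0 ∧
      t = (∑ j, rinner (w * wᴴ) (A j)) / frob w ^ 2}) :
    sSup {t : ℝ | ∃ x y : Matrix (Fin n) (Fin r) ℂ, theta x ≠ theta y ∧
      t = (∑ j, (Real.sqrt (rinner (x * xᴴ) (A j))
            - Real.sqrt (rinner (y * yᴴ) (A j))) ^ 2)
          / frob (theta x - theta y) ^ 2} = B := by
  obtain ⟨a, ha0, haB, hfr⟩ := hframe
  have hup : ∀ z : Matrix (Fin n) (Fin r) ℂ, ∑ j, rinner (z * zᴴ) (A j) ≤ B * frob z ^ 2 :=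
    fun z => (hfr z).2
  have k0 : Fin r := ⟨0, hr⟩
  -- upper bound
  have hbound : ∀ t ∈ {t : ℝ | ∃ x y : Matrix (Fin n) (Fin r) ℂ, theta x ≠ theta y ∧
      t = (∑ j, (Real.sqrt (rinner (x * xᴴ) (A j))
            - Real.sqrt (rinner (y * yᴴ) (A j))) ^ 2)
          / frob (theta x - theta y) ^ 2}, t ≤ B := by
    rintro t ⟨x, y, hxy, rfl⟩
    have hΔ : (0:ℝ) < frob (theta x - theta y) := frob_pos (sub_ne_zero.mpr hxy)
    rw [div_le_iff₀ (by positivity)]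
    calc ∑ j, (Real.sqrt (rinner (x * xᴴ) (A j)) - Real.sqrt (rinner (y * yᴴ) (A j))) ^ 2
        ≤ ∑ j, rinner ((theta x - theta y) * (theta x - theta y)ᴴ) (A j) := by
          refine Finset.sum_le_sum fun j _ => ?_
          rw [alpha_eq x (hA j), alpha_eq y (hA j)]
          have h1 : |frob ((hA j).sqrt * theta x) - frob ((hA j).sqrt * theta y)|
              ≤ frob ((hA j).sqrt * (theta x - theta y)) := by
            rw [Matrix.mul_sub]; exact frob_sub_frob _ _
          calc (frob ((hA j).sqrt * theta x) - frob ((hA j).sqrt * theta y)) ^ 2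
              = |frob ((hA j).sqrt * theta x) - frob ((hA j).sqrt * theta y)| ^ 2 :=
                (sq_abs _).symm
            _ ≤ frob ((hA j).sqrt * (theta x - theta y)) ^ 2 :=
                pow_le_pow_left₀ (abs_nonneg _) h1 2
            _ = rinner ((theta x - theta y) * (theta x - theta y)ᴴ) (A j) :=
                (rinner_outer _ (hA j)).symm
      _ ≤ B * frob (theta x - theta y) ^ 2 := sum_outer_le k0 A B hup _
  -- inclusion of the frame-quotient set
  have hsub : {t : ℝ | ∃ w : Matrix (Fin n) (Fin r) ℂ, w ≠ 0 ∧
      t = (∑ j, rinner (w * wᴴ) (A j)) / frob w ^ 2} ⊆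
      {t : ℝ | ∃ x y : Matrix (Fin n) (Fin r) ℂ, theta x ≠ theta y ∧
      t = (∑ j, (Real.sqrt (rinner (x * xᴴ) (A j))
            - Real.sqrt (rinner (y * yᴴ) (A j))) ^ 2)
          / frob (theta x - theta y) ^ 2} := by
    rintro t ⟨w, hw, rfl⟩
    refine ⟨w, 0, ?_, ?_⟩
    · rw [theta_zero]; exact theta_ne_zero hw
    · rw [theta_zero, sub_zero, frob_theta]
      congr 1
      refine Finset.sum_congr rfl fun j _ => ?_
      have h0 : rinner ((0 : Matrix (Fin n) (Fin r) ℂ) * (0 : Matrix (Fin n) (Fin r) ℂ)ᴴ)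
          (A j) = 0 := by simp [rinner]
      rw [h0, Real.sqrt_zero, sub_zero, Real.sq_sqrt (rinner_outer_nonneg w (hA j))]
  -- nonemptiness
  have hn0 : 0 < n := lt_of_lt_of_le hr hrn
  have hx0 : (Matrix.of fun _ _ => (1:ℂ) : Matrix (Fin n) (Fin r) ℂ) ≠ 0 := by
    intro h
    have h1 : (1:ℂ) = 0 := by
      simpa using congrFun (congrFun h ⟨0, hn0⟩) k0
    exact one_ne_zero h1
  have hne' : {t : ℝ | ∃ w : Matrix (Fin n) (Fin r) ℂ, w ≠ 0 ∧
      t = (∑ j, rinner (w * wᴴ) (A j)) / frob w ^ 2}.Nonempty :=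
    ⟨_, ⟨_, hx0, rfl⟩⟩
  refine le_antisymm (csSup_le (hne'.mono hsub) hbound) ?_
  calc B = sSup {t : ℝ | ∃ w : Matrix (Fin n) (Fin r) ℂ, w ≠ 0 ∧
        t = (∑ j, rinner (w * wᴴ) (A j)) / frob w ^ 2} := hB
    _ ≤ _ := csSup_le_csSup ⟨B, hbound⟩ hne' hsub
end
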